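/- Let (X,ρ) be a compact metric space and A ⊆ X a nonempty closed subset containing all isolated points of X, and let (q_n)_{n≥1} be an enumeration of a countable dense subset of A in which every listed point is repeated infinitely many times. Then the set D_A = {(q_n, 1/n) : n ≥ 1} belongs to D_{X,A}; in particular, D_{X,A} is nonempty. -/

import Mathlib

open Topology

/-- The canonical copy `X × {0}` of `X` inside `X × ℝ`. -/
def xzero (X : Type*) : Set (X × ℝ) := Set.univ ×ˢ ({0} : Set ℝ)

/-- The collection `D_{X,A}`: nonempty sets `D ⊆ X × (0,1]` all of whose points are isolated
in the subspace `X×{0} ∪ D` and with `cl(D) − D = A × {0}`. -/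
def Dcoll (X : Type*) [TopologicalSpace X] (A : Set X) : Set (Set (X × ℝ)) :=
  {D | D.Nonempty ∧ (∀ p ∈ D, p.2 ∈ Set.Ioc (0 : ℝ) 1) ∧
    (∀ p ∈ D, 𝓝[(xzero X ∪ D) \ {p}] p = ⊥) ∧
    closure D \ D = A ×ˢ ({0} : Set ℝ)}

lemma aux_inv_close {m n : ℕ} (hm : 1 ≤ m) (hn : 1 ≤ n)
    (h : |(m:ℝ)⁻¹ - (n:ℝ)⁻¹| < (n:ℝ)⁻¹ - ((n:ℝ)+1)⁻¹) : m = n := by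
  have ha : (0:ℝ) < m := by exact_mod_cast hm
  have hb : (0:ℝ) < n := by exact_mod_cast hn
  rw [abs_lt] at h
  obtain ⟨h1, h2⟩ := h
  rcases lt_trichotomy m n with hlt | heq | hgt
  · exfalso
    have hmn : (m:ℝ) + 1 ≤ n := by exact_mod_cast hlt
    have e1 : (m:ℝ)⁻¹ - (n:ℝ)⁻¹ = ((n:ℝ) - m)/(m*n) := by field_simp
    have e2 : (n:ℝ)⁻¹ - ((n:ℝ)+1)⁻¹ = 1/((n:ℝ)*((n:ℝ)+1)) := by
      field_simp
      ring
    rw [e1, e2, div_lt_div_iff₀ (by positivity) (by positivity)] at h2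
    have h6 : (1:ℝ) ≤ (n:ℝ) - m := by linarith
    have h7 : (m:ℝ)*n < (n:ℝ)*((n:ℝ)+1) := by nlinarith
    have h8 : (n:ℝ)*((n:ℝ)+1) ≤ ((n:ℝ) - m)*((n:ℝ)*((n:ℝ)+1)) :=
      le_mul_of_one_le_left (by positivity) h6
    linarith
  · exact heq
  · exfalso
    have hmn : (n:ℝ) + 1 ≤ m := by exact_mod_cast hgt
    have h3 : ((n:ℝ)+1)⁻¹ < (m:ℝ)⁻¹ := by linarith
    have h4 : (m:ℝ) < (n:ℝ)+1 := by
      rwa [inv_lt_inv₀ (by positivity) ha] at h3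
    linarith

theorem stmt18 {X : Type} [MetricSpace X] [CompactSpace X]
    (A : Set X) (hAne : A.Nonempty) (hAcl : IsClosed A)
    (hAiso : {x : X | 𝓝[≠] x = ⊥} ⊆ A)
    (q : ℕ → X)
    (hmem : ∀ n, 1 ≤ n → q n ∈ A)
    (hdense : A ⊆ closure {x : X | ∃ n, 1 ≤ n ∧ q n = x})
    (hrep : ∀ n, 1 ≤ n → {m : ℕ | 1 ≤ m ∧ q m = q n}.Infinite) :
    {p : X × ℝ | ∃ n : ℕ, 1 ≤ n ∧ p = (q n, (n : ℝ)⁻¹)} ∈ Dcoll X A := by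
  set D : Set (X × ℝ) := {p : X × ℝ | ∃ n : ℕ, 1 ≤ n ∧ p = (q n, (n : ℝ)⁻¹)} with hDdef
  have hDsub : D ⊆ A ×ˢ Set.Icc (0:ℝ) 1 := by
    rintro p ⟨n, hn, rfl⟩
    refine ⟨hmem n hn, ?_, ?_⟩
    · positivity
    · exact inv_le_one_of_one_le₀ (by exact_mod_cast hn)
  have hclsub : closure D ⊆ A ×ˢ Set.Icc (0:ℝ) 1 :=
    closure_minimal hDsub (hAcl.prod isClosed_Icc)
  have key1 : ∀ a ∈ A, (a, (0:ℝ)) ∈ closure D := by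
    intro a ha
    rw [Metric.mem_closure_iff]
    intro ε hε
    have h1 := hdense ha
    rw [Metric.mem_closure_iff] at h1
    obtain ⟨x, ⟨n, hn, rfl⟩, hx⟩ := h1 ε hε
    obtain ⟨m, hmmem, hmgt⟩ := (hrep n hn).exists_gt (Nat.ceil ε⁻¹)
    obtain ⟨hm1, hmq⟩ := hmmem
    refine ⟨(q m, (m:ℝ)⁻¹), ⟨m, hm1, rfl⟩, ?_⟩
    rw [Prod.dist_eq]
    apply max_lt
    · rw [hmq]; exact hx
    · have hεm : ε⁻¹ < (m:ℝ) := lt_of_le_of_lt (Nat.le_ceil _) (by exact_mod_cast hmgt)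
      have : (m:ℝ)⁻¹ < ε := inv_lt_of_inv_lt₀ hε hεm
      have hm0 : (0:ℝ) < m := by positivity
      show dist (0:ℝ) ((m:ℝ)⁻¹) < ε
      rw [Real.dist_eq, zero_sub, abs_neg, abs_inv, Nat.abs_cast]
      exact this
  have key2 : ∀ z ∈ closure D, z ∉ D → z ∈ A ×ˢ ({0} : Set ℝ) := by
    intro z hz hzD
    obtain ⟨hz1, hz2⟩ := hclsub hz
    refine ⟨hz1, ?_⟩
    by_contra h0
    have hc : 0 < z.2 := lt_of_le_of_ne hz2.1 (Ne.symm h0)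
    set N := Nat.ceil (z.2)⁻¹ + 1 with hN
    have hN0 : (0:ℝ) < N := by positivity
    have hNc : (N:ℝ)⁻¹ < z.2 := by
      have h5 : (z.2)⁻¹ < (N:ℝ) := by
        calc (z.2)⁻¹ ≤ (Nat.ceil (z.2)⁻¹ : ℝ) := Nat.le_ceil _
        _ < N := by exact_mod_cast Nat.lt_succ_self _
      exact inv_lt_of_inv_lt₀ hc h5
    set F := (fun n : ℕ => (q n, (n:ℝ)⁻¹)) '' (Set.Icc 1 N) with hF
    have hFfin : F.Finite := (Set.finite_Icc 1 N).image _
    have hsplit : D ⊆ (D ∩ F) ∪ {p : X × ℝ | p.2 ≤ (N:ℝ)⁻¹} := by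
      rintro p ⟨n, hn, rfl⟩
      by_cases hle : n ≤ N
      · left; exact ⟨⟨n, hn, rfl⟩, ⟨n, ⟨hn, hle⟩, rfl⟩⟩
      · right
        push_neg at hle
        have : (N:ℝ) ≤ (n:ℝ) := by exact_mod_cast hle.le
        simpa using inv_anti₀ hN0 this
    have hcl2 : closure D ⊆ (D ∩ F) ∪ {p : X × ℝ | p.2 ≤ (N:ℝ)⁻¹} :=
      closure_minimal hsplit
        (((hFfin.subset Set.inter_subset_right).isClosed).union
          (isClosed_le continuous_snd continuous_const))
    rcases hcl2 hz with h | h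
    · exact hzD h.1
    · simp only [Set.mem_setOf_eq] at h
      linarith
  refine ⟨⟨(q 1, ((1:ℕ):ℝ)⁻¹), 1, le_refl 1, rfl⟩, ?_, ?_, ?_⟩
  · rintro p ⟨n, hn, rfl⟩
    exact ⟨by positivity, inv_le_one_of_one_le₀ (by exact_mod_cast hn)⟩
  · rintro p ⟨n, hn, rfl⟩
    rw [nhdsWithin, Filter.inf_principal_eq_bot]
    have hε : (0:ℝ) < (n:ℝ)⁻¹ - ((n:ℝ)+1)⁻¹ := by
      have hn0 : (0:ℝ) < n := by exact_mod_cast hn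
      rw [sub_pos]
      exact inv_strictAnti₀ (by positivity) (by linarith)
    have hU : {z : X × ℝ | |z.2 - (n:ℝ)⁻¹| < (n:ℝ)⁻¹ - ((n:ℝ)+1)⁻¹} ∈ 𝓝 ((q n, (n:ℝ)⁻¹) : X × ℝ) := by
      apply IsOpen.mem_nhds
      · exact isOpen_lt (by continuity) continuous_const
      · simp [hε]
    filter_upwards [hU] with z hz
    rintro ⟨hz1 | hz1, hz2⟩
    · obtain ⟨-, hz0⟩ := hz1
      simp only [Set.mem_singleton_iff] at hz0
      rw [hz0] at hz
      simp only [Set.mem_setOf_eq, zero_sub, abs_neg, abs_inv, Nat.abs_cast] at hz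
      have hn0 : (0:ℝ) < n := by exact_mod_cast hn
      have : (0:ℝ) < ((n:ℝ)+1)⁻¹ := by positivity
      linarith
    · obtain ⟨m, hm, rfl⟩ := hz1
      simp only [Set.mem_setOf_eq] at hz
      have := aux_inv_close hm hn hz
      subst this
      exact hz2 rfl
  · ext z
    simp only [Set.mem_diff]
    constructor
    · rintro ⟨hz, hzD⟩
      exact key2 z hz hzD
    · rintro ⟨hz1, hz2⟩
      simp only [Set.mem_singleton_iff] at hz2
      constructor
      · have h := key1 z.1 hz1
        have : (z.1, (0:ℝ)) = z := by
          ext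
          · rfl
          · exact hz2.symm
        rwa [this] at h
      · rintro ⟨n, hn, hzeq⟩
        have hn0 : (0:ℝ) < n := by exact_mod_cast hn
        have h9 : (0:ℝ) = (n:ℝ)⁻¹ := by rw [← hz2, hzeq]
        have h10 : (0:ℝ) < (n:ℝ)⁻¹ := by positivity
        linarith
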